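/- Let G be a finite group, k an algebraically closed field of characteristic r, H ≤ G with O_{r'}(H) = O^r(H), and P = Ind_H^G k. If V is a kG-module with V^H = 0, then dim H^1(G, V) = dim Hom_G(V*, P/k), where k embeds in P as the G-fixed submodule. -/

import Mathlib

/-- `OrEqOr r H` says that the largest normal subgroup of `H` of order not divisible
by `r` coincides with the smallest normal subgroup of `H` with `r`-group quotient
(i.e. `O_{r'}(H) = O^r(H)`), where for finite `H` the quotient `H ⧸ N` being an
`r`-group is expressed by the index of `N` being a power of `r`. -/
def OrEqOr (r : ℕ) (H : Type) [Group H] : Prop :=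
  ∃ A : Subgroup H, A.Normal ∧ (¬ r ∣ Nat.card A) ∧
    (∀ N : Subgroup H, N.Normal → ¬ r ∣ Nat.card N → N ≤ A) ∧
    (∃ m : ℕ, A.index = r ^ m) ∧
    (∀ N : Subgroup H, N.Normal → (∃ m : ℕ, N.index = r ^ m) → A ≤ N)

/-- The quotient representation on `V ⧸ W` for a `G`-invariant subspace `W`. -/
noncomputable def Representation.quot {k G V : Type} [Field k] [Group G] [AddCommGroup V]
    [Module k V] (ρ : Representation k G V) (W : Submodule k V)
    (hW : ∀ g : G, W ≤ W.comap (ρ g)) : Representation k G (V ⧸ W) where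
  toFun g := W.mapQ W (ρ g) (hW g)
  map_one' := by
    apply Submodule.linearMap_qext; ext v; simp [Submodule.mapQ_apply]
  map_mul' g h := by
    apply Submodule.linearMap_qext; ext v; simp [Submodule.mapQ_apply]

/-- The permutation module `P = Ind_H^G k` on the cosets of `H`, as a representation. -/
noncomputable def permRep (k G : Type) [Field k] [Group G] (H : Subgroup G) : Rep k G :=
  Rep.ofMulAction k G (G ⧸ H)

/-- The quotient `P / P^G` of the permutation module on cosets of `H` by its
`G`-fixed submodule. -/
noncomputable def permQuot (k G : Type) [Field k] [Group G] (H : Subgroup G) : Rep k G :=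
  Rep.of ((Representation.ofMulAction k G (G ⧸ H)).quot
    (Representation.invariants (Representation.ofMulAction k G (G ⧸ H)))
    (fun g v hv => by
      rw [Submodule.mem_comap,
        (Representation.mem_invariants (Representation.ofMulAction k G (G ⧸ H)) v).mp hv g]
      exact hv))

open CategoryTheory

lemma aux_pgroup_fixed {r : ℕ} [hr : Fact r.Prime] {k : Type} [Field k] [CharP k r]
    {Q : Type} [Group Q] [Finite Q] (hQ : IsPGroup r Q)
    {M : Type*} [AddCommGroup M] [Module k M] (ρ : Representation k Q M)
    {x : M} (hx : x ≠ 0) : ∃ y : M, y ≠ 0 ∧ ∀ q : Q, ρ q y = y := by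
  by_contra hcon
  push_neg at hcon
  letI : Algebra (ZMod r) k := ZMod.algebra k r
  letI : Module (ZMod r) M := Module.compHom M (algebraMap (ZMod r) k)
  have hsmul : ∀ (c : ZMod r) (m : M), c • m = (algebraMap (ZMod r) k c) • m :=
    fun _ _ => rfl
  set S : Set M := Set.range (fun q : Q => ρ q x) with hS
  have hSfin : S.Finite := Set.finite_range _
  set M₀ : Submodule (ZMod r) M := Submodule.span (ZMod r) S with hM₀
  haveI : Module.Finite (ZMod r) M₀ := Module.Finite.span_of_finite _ hSfin
  haveI : Finite M₀ := Module.finite_of_finite (ZMod r)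
  have hmaps : ∀ (q : Q), ∀ m ∈ M₀, ρ q m ∈ M₀ := by
    intro q m hm
    induction hm using Submodule.span_induction with
    | mem m hm =>
      obtain ⟨q', rfl⟩ := hm
      apply Submodule.subset_span
      exact ⟨q * q', by simp [map_mul]⟩
    | zero => simp
    | add a b _ _ ha hb => rw [map_add]; exact add_mem ha hb
    | smul c a _ ha =>
      rw [hsmul, map_smul, ← hsmul]
      exact Submodule.smul_mem _ _ ha
  letI : MulAction Q M₀ :=
    { smul := fun q m => ⟨ρ q m, hmaps q m m.2⟩
      one_smul := fun m => Subtype.ext (by show ρ 1 m.1 = m.1; rw [map_one]; rfl)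
      mul_smul := fun q q' m => Subtype.ext
        (by show ρ (q * q') m.1 = ρ q (ρ q' m.1); rw [map_mul]; rfl) }
  have hfix : MulAction.fixedPoints Q M₀ = {0} := by
    ext m
    simp only [Set.mem_singleton_iff, MulAction.mem_fixedPoints]
    constructor
    · intro hm
      by_contra hm0
      have hmv : (m : M) ≠ 0 := fun h => hm0 (Subtype.ext h)
      obtain ⟨q, hq⟩ := hcon m hmv
      exact hq (congrArg Subtype.val (hm q))
    · rintro rfl q
      exact Subtype.ext (by show ρ q 0 = 0; rw [map_zero])
  have hcard1 : Nat.card (MulAction.fixedPoints Q M₀) = 1 := by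
    rw [hfix]; simp
  have hmod := hQ.card_modEq_card_fixedPoints M₀
  rw [hcard1] at hmod
  haveI : Fintype M₀ := Fintype.ofFinite _
  have hxmem : x ∈ M₀ := Submodule.subset_span ⟨1, by simp⟩
  haveI : Nontrivial M₀ := ⟨⟨⟨x, hxmem⟩, 0, fun h => hx (congrArg Subtype.val h)⟩⟩
  have hcardpow : Fintype.card M₀ = (Fintype.card (ZMod r)) ^ Module.finrank (ZMod r) M₀ :=
    Module.card_eq_pow_finrank
  have hrdvd : r ∣ Nat.card M₀ := by
    rw [Nat.card_eq_fintype_card, hcardpow, ZMod.card]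
    exact dvd_pow_self r Module.finrank_pos.ne'
  have h0 : Nat.card M₀ ≡ 0 [MOD r] := (Nat.modEq_zero_iff_dvd).2 hrdvd
  have h10 : (1 : ℕ) ≡ 0 [MOD r] := hmod.symm.trans h0
  have : r ∣ 1 := (Nat.modEq_zero_iff_dvd).1 h10
  exact hr.out.one_lt.ne' (Nat.dvd_one.mp this)

lemma aux_cobound {r : ℕ} [hr : Fact r.Prime] {k G : Type} [Field k] [CharP k r]
    [Group G] [Finite G] (H : Subgroup G) (hH : OrEqOr r H)
    (V : Rep k G)
    (hV : Representation.invariants (V.ρ.comp H.subtype) = ⊥)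
    (f : G → V) (hf : f ∈ groupCohomology.cocycles₁ V) :
    ∃ v : V, ∀ h ∈ H, f h = V.ρ h v - v := by
  classical
  obtain ⟨A, hAn, hAc, -, ⟨m, hAi⟩, -⟩ := hH
  haveI : Fintype A := Fintype.ofFinite A
  have hcoc : ∀ g h : G, f (g * h) = V.ρ g (f h) + f g :=
    fun g h => (groupCohomology.mem_cocycles₁_iff f).1 hf g h
  have hn : ((Nat.card A : k)) ≠ 0 := by
    rw [Ne, CharP.cast_eq_zero_iff k r]
    exact hAc
  have hkey : ∀ a : A, (∑ b : A, f ((b : H) : G))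
      = V.ρ ((a : H) : G) (∑ b : A, f ((b : H) : G)) + (Nat.card A) • f ((a : H) : G) := by
    intro a
    have h1 : (∑ b : A, f ((b : H) : G)) = ∑ b : A, f (((a * b : A) : H) : G) :=
      (Equiv.sum_comp (Equiv.mulLeft a) (fun b : A => f ((b : H) : G))).symm
    have h2 : ∀ b : A, f (((a * b : A) : H) : G)
        = V.ρ ((a : H) : G) (f ((b : H) : G)) + f ((a : H) : G) := by
      intro b
      have : (((a * b : A) : H) : G) = ((a : H) : G) * ((b : H) : G) := by push_cast; ring_nf
      rw [this, hcoc]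
    calc (∑ b : A, f ((b : H) : G)) = ∑ b : A, f (((a * b : A) : H) : G) := h1
      _ = ∑ b : A, (V.ρ ((a : H) : G) (f ((b : H) : G)) + f ((a : H) : G)) :=
          Finset.sum_congr rfl (fun b _ => h2 b)
      _ = V.ρ ((a : H) : G) (∑ b : A, f ((b : H) : G)) + (Nat.card A) • f ((a : H) : G) := by
          rw [Finset.sum_add_distrib, ← map_sum, Finset.sum_const, Finset.card_univ,
            Nat.card_eq_fintype_card]
  set s : V := ∑ b : A, f ((b : H) : G) with hs
  set v : V := -((Nat.card A : k)⁻¹ • s) with hv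
  have hA2 : ∀ a : A, f ((a : H) : G) = V.ρ ((a : H) : G) v - v := by
    intro a
    have h3 : (Nat.card A : k) • f ((a : H) : G) = s - V.ρ ((a : H) : G) s := by
      rw [Nat.cast_smul_eq_nsmul, eq_sub_iff_add_eq, add_comm]
      exact (hkey a).symm
    have h4 : f ((a : H) : G) = (Nat.card A : k)⁻¹ • (s - V.ρ ((a : H) : G) s) := by
      rw [← h3, smul_smul, inv_mul_cancel₀ hn, one_smul]
    have h5 : V.ρ ((a : H) : G) v - v = (Nat.card A : k)⁻¹ • (s - V.ρ ((a : H) : G) s) := by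
      rw [hv, map_neg, map_smul, smul_sub]
      abel
    rw [h4, h5]
  set f₂ : G → V := fun g => f g - (V.ρ g v - v) with hf₂
  have hf₂c : ∀ g h : G, f₂ (g * h) = V.ρ g (f₂ h) + f₂ g := by
    intro g h
    simp only [hf₂, hcoc g h, map_mul, map_sub, Module.End.mul_apply]
    abel
  have hf₂A : ∀ a : A, f₂ ((a : H) : G) = 0 := by
    intro a
    simp only [hf₂, hA2 a, sub_self]
  have hf₂one : f₂ 1 = 0 := by
    have := hf₂A 1
    simpa using this
  have hWvals : ∀ h : H, ∀ a : A, V.ρ ((a : H) : G) (f₂ (h : G)) = f₂ (h : G) := by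
    intro h a
    set a' : H := (a : H)
    have hconj : (h⁻¹ * a' * h : H) ∈ A := by
      have := hAn.conj_mem (a : H) a.2 h⁻¹
      simpa [mul_assoc] using this
    set c : A := ⟨h⁻¹ * a' * h, hconj⟩
    have hgrp : ((a' : G)) * (h : G) = (h : G) * ((c : H) : G) := by
      push_cast [c]
      group
    have e1 : f₂ ((a' : G) * (h : G)) = V.ρ ((a' : H) : G) (f₂ (h : G)) := by
      rw [hf₂c, hf₂A a, add_zero]
    have e2 : f₂ ((a' : G) * (h : G)) = f₂ (h : G) := by
      rw [hgrp, hf₂c]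
      rw [hf₂A c, map_zero, zero_add]
    rw [← e1, e2]
  -- the invariants of A acting on V
  set ρA : Representation k A V := V.ρ.comp (H.subtype.comp A.subtype) with hρA
  set W₀ : Submodule k V := Representation.invariants ρA with hW₀
  have hmemW : ∀ x : V, x ∈ W₀ ↔ ∀ a : A, V.ρ ((a : H) : G) x = x := by
    intro x
    rw [hW₀, Representation.mem_invariants]
    rfl
  have hres : ∀ h : H, ∀ x ∈ W₀, V.ρ (h : G) x ∈ W₀ := by
    intro h x hx
    rw [hmemW] at hx ⊢
    intro a
    set a' : H := (a : H)
    have hconj : (h⁻¹ * a' * h : H) ∈ A := by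
      have := hAn.conj_mem (a : H) a.2 h⁻¹
      simpa [mul_assoc] using this
    set c : A := ⟨h⁻¹ * a' * h, hconj⟩
    have hgrp : ((a' : G)) * (h : G) = (h : G) * ((c : H) : G) := by
      push_cast [c]
      group
    have : V.ρ ((a' : H) : G) (V.ρ (h : G) x) = V.ρ (h : G) (V.ρ ((c : H) : G) x) := by
      rw [← Module.End.mul_apply, ← map_mul, hgrp, map_mul, Module.End.mul_apply]
    rw [this, hx c]
  set ρW : Representation k H W₀ :=
    { toFun := fun h => (V.ρ (h : G)).restrict (hres h)
      map_one' := by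
        ext x
        simp [LinearMap.restrict_apply]
      map_mul' := fun g h => by
        ext x
        simp [LinearMap.restrict_apply, Module.End.mul_apply] } with hρW
  have hker : A ≤ ρW.ker := by
    intro a ha
    rw [MonoidHom.mem_ker, hρW]
    ext x
    simp only [MonoidHom.coe_mk, OneHom.coe_mk, LinearMap.restrict_apply]
    exact ((hmemW x.1).1 x.2) ⟨a, ha⟩
  set ρQ : Representation k (H ⧸ A) W₀ := QuotientGroup.lift A ρW hker with hρQ
  have hQpg : IsPGroup r (H ⧸ A) := IsPGroup.of_card (by rw [← hAi]; rfl)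
  -- show f₂ vanishes on H
  have hf₂H : ∀ h : H, f₂ (h : G) = 0 := by
    intro h
    by_contra hne
    have hx0 : (⟨f₂ (h : G), (hmemW _).2 (hWvals h)⟩ : W₀) ≠ 0 := by
      intro hc
      exact hne (congrArg Subtype.val hc)
    obtain ⟨y, hy0, hyfix⟩ := aux_pgroup_fixed hQpg ρQ hx0
    have hyH : ∀ h' : H, V.ρ (h' : G) y.1 = y.1 := by
      intro h'
      have := hyfix (QuotientGroup.mk h')
      have h5 : ρQ (QuotientGroup.mk h') = ρW h' := rfl
      rw [h5] at this
      exact congrArg Subtype.val this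
    have : y.1 ∈ Representation.invariants (V.ρ.comp H.subtype) := by
      rw [Representation.mem_invariants]
      intro h'
      exact hyH h'
    rw [hV, Submodule.mem_bot] at this
    exact hy0 (Subtype.ext this)
  refine ⟨v, fun h hh => ?_⟩
  have := hf₂H ⟨h, hh⟩
  simp only [hf₂] at this
  have := sub_eq_zero.mp this
  exact this

section Main

variable {k G : Type} [Field k] [Group G] [Finite G] (H : Subgroup G)

local notation "P" => MonoidAlgebra k (G ⧸ H)
local notation "ρP" => Representation.ofMulAction k G (G ⧸ H)
local notation "InvP" => Representation.invariants (k := k) (G := G) (V := MonoidAlgebra k (G ⧸ H))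
  (Representation.ofMulAction k G (G ⧸ H))

/-- The evaluation functional `p ↦ p(gH) - p(H)`. -/
noncomputable def eP (g : G) : MonoidAlgebra k (G ⧸ H) →ₗ[k] k :=
  (Finsupp.lapply (QuotientGroup.mk g) - Finsupp.lapply (QuotientGroup.mk 1)) ∘ₗ
    (MonoidAlgebra.coeffLinearEquiv k).toLinearMap

lemma eP_apply (g : G) (p : P) :
    eP H g p = p.coeff (QuotientGroup.mk g) - p.coeff (QuotientGroup.mk 1) := rfl

lemma invP_le_ker (g : G) : InvP ≤ LinearMap.ker (eP H g) := by
  intro p hp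
  rw [Representation.mem_invariants] at hp
  have h1 : ρP g p = p := hp g
  have h2 : p.coeff (QuotientGroup.mk g) = p.coeff (QuotientGroup.mk 1) := by
    conv_lhs => rw [← h1]
    rw [Representation.coeff_ofMulAction]
    congr 1
    show g⁻¹ • (QuotientGroup.mk g : G ⧸ H) = QuotientGroup.mk 1
    rw [MulAction.Quotient.smul_mk]
    congr 1
    simp [smul_eq_mul]
  rw [LinearMap.mem_ker, eP_apply, h2, sub_self]

/-- The induced functional on `P ⧸ P^G`. -/
noncomputable def ePbar (g : G) : (permQuot k G H).V →ₗ[k] k :=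
  Submodule.liftQ _ (eP H g) (invP_le_ker H g)

lemma ePbar_mk (g : G) (p : P) :
    ePbar H g (Submodule.Quotient.mk p) = p.coeff (QuotientGroup.mk g) - p.coeff (QuotientGroup.mk 1) :=
  rfl

lemma permQuot_ρ_mk (g : G) (p : P) :
    (permQuot k G H).ρ g (Submodule.Quotient.mk p) = Submodule.Quotient.mk (ρP g p) := rfl

lemma ePbar_vanish {h : G} (hh : h ∈ H) (q : (permQuot k G H).V) : ePbar H h q = 0 := by
  obtain ⟨p, rfl⟩ := Submodule.Quotient.mk_surjective _ q
  have hmk : (QuotientGroup.mk h : G ⧸ H) = QuotientGroup.mk 1 := by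
    rw [QuotientGroup.eq]
    simpa using hh
  rw [ePbar_mk, hmk, sub_self]

lemma ePbar_cocycle (g₁ g₂ : G) (q : (permQuot k G H).V) :
    ePbar H (g₁ * g₂) q = ePbar H g₂ ((permQuot k G H).ρ g₁⁻¹ q) + ePbar H g₁ q := by
  obtain ⟨p, rfl⟩ := Submodule.Quotient.mk_surjective _ q
  rw [permQuot_ρ_mk, ePbar_mk, ePbar_mk, ePbar_mk]
  have e1 : (ρP g₁⁻¹ p).coeff (QuotientGroup.mk g₂) = p.coeff (QuotientGroup.mk (g₁ * g₂)) := by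
    rw [Representation.coeff_ofMulAction]
    congr 1
    show g₁⁻¹⁻¹ • (QuotientGroup.mk g₂ : G ⧸ H) = _
    rw [MulAction.Quotient.smul_mk]
    congr 1
    simp [smul_eq_mul]
  have e2 : (ρP g₁⁻¹ p).coeff (QuotientGroup.mk 1) = p.coeff (QuotientGroup.mk g₁) := by
    rw [Representation.coeff_ofMulAction]
    congr 1
    show g₁⁻¹⁻¹ • (QuotientGroup.mk 1 : G ⧸ H) = _
    rw [MulAction.Quotient.smul_mk]
    congr 1
    simp [smul_eq_mul]
  rw [e1, e2]
  ring


section Phi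

variable (V : Rep k G) [FiniteDimensional k V]

noncomputable def PhiFun (φ : Rep.of V.ρ.dual ⟶ permQuot k G H) : G → V :=
  fun g => (Module.evalEquiv k V).symm ((ePbar H g).comp φ.hom.toLinearMap)

lemma PhiFun_pair (φ : Rep.of V.ρ.dual ⟶ permQuot k G H) (g : G) (ξ : Module.Dual k V) :
    ξ (PhiFun H V φ g) = ePbar H g (φ.hom ξ) := by
  rw [PhiFun, Module.apply_evalEquiv_symm_apply]
  rfl

lemma PhiFun_mem_oneCocycles (φ : Rep.of V.ρ.dual ⟶ permQuot k G H) :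
    PhiFun H V φ ∈ groupCohomology.cocycles₁ V := by
  rw [groupCohomology.mem_cocycles₁_iff]
  intro g₁ g₂
  rw [← sub_eq_zero, ← Module.forall_dual_apply_eq_zero_iff k]
  intro ξ
  have hdual : ξ (V.ρ g₁ (PhiFun H V φ g₂)) = ePbar H g₂ ((permQuot k G H).ρ g₁⁻¹ (φ.hom ξ)) := by
    have h1 : ξ (V.ρ g₁ (PhiFun H V φ g₂)) = (V.ρ.dual g₁⁻¹ ξ) (PhiFun H V φ g₂) := by
      rw [Representation.dual_apply]
      simp [Module.Dual.transpose_apply]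
    have h2 : (Rep.of V.ρ.dual).ρ g₁⁻¹ ξ = V.ρ.dual g₁⁻¹ ξ := rfl
    rw [h1, PhiFun_pair, ← h2, Rep.hom_comm_apply]
  rw [map_sub, map_add, PhiFun_pair, PhiFun_pair, hdual, ePbar_cocycle H g₁ g₂ (φ.hom ξ)]
  ring

lemma PhiFun_vanish (φ : Rep.of V.ρ.dual ⟶ permQuot k G H) {h : G} (hh : h ∈ H) :
    PhiFun H V φ h = 0 := by
  rw [← Module.forall_dual_apply_eq_zero_iff k]
  intro ξ
  rw [PhiFun_pair, ePbar_vanish H hh]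

end Phi

section Psi

variable (V : Rep k G) [FiniteDimensional k V]
variable (f : G → V)

/-- The induced function on cosets, for a cocycle vanishing on `H`. -/
noncomputable def fbarFun (hf1 : f ∈ groupCohomology.cocycles₁ V) (hf2 : ∀ h ∈ H, f h = 0) :
    G ⧸ H → V :=
  fun x => Quotient.liftOn' x f (by
    intro a b hab
    rw [QuotientGroup.leftRel_apply] at hab
    have : b = a * (a⁻¹ * b) := by group
    rw [this, (groupCohomology.mem_cocycles₁_iff f).1 hf1 a (a⁻¹ * b), hf2 _ hab,
      map_zero, zero_add])

variable (hf1 : f ∈ groupCohomology.cocycles₁ V) (hf2 : ∀ h ∈ H, f h = 0)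

lemma fbarFun_mk (g : G) : fbarFun H V f hf1 hf2 (QuotientGroup.mk g) = f g := rfl

lemma fbarFun_smul (g : G) (x : G ⧸ H) :
    fbarFun H V f hf1 hf2 (g⁻¹ • x) = V.ρ g⁻¹ (fbarFun H V f hf1 hf2 x) + f g⁻¹ := by
  obtain ⟨a, rfl⟩ := QuotientGroup.mk_surjective x
  rw [MulAction.Quotient.smul_mk, smul_eq_mul, fbarFun_mk, fbarFun_mk]
  exact (groupCohomology.mem_cocycles₁_iff f).1 hf1 g⁻¹ a

/-- The linear map `ξ ↦ (x ↦ ξ (fbar x))` into the permutation module. -/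
noncomputable def PsiF : Module.Dual k V →ₗ[k] MonoidAlgebra k (G ⧸ H) :=
  (((Finsupp.linearEquivFunOnFinite k k (G ⧸ H)).symm.trans
    (MonoidAlgebra.coeffLinearEquiv k).symm).toLinearMap).comp
    (LinearMap.pi (fun x => LinearMap.applyₗ (fbarFun H V f hf1 hf2 x)))

lemma finsupp_symm_apply (h : (G ⧸ H) → k) (x : G ⧸ H) :
    (Finsupp.equivFunOnFinite.symm h) x = h x :=
  congrFun (Finsupp.equivFunOnFinite.apply_symm_apply h) x

lemma PsiF_apply (ξ : Module.Dual k V) (x : G ⧸ H) :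
    (PsiF H V f hf1 hf2 ξ).coeff x = ξ (fbarFun H V f hf1 hf2 x) := by
  show (Finsupp.equivFunOnFinite.symm (fun x => ξ (fbarFun H V f hf1 hf2 x))) x = _
  rw [finsupp_symm_apply]

lemma const_mem_invP (c : k) :
    MonoidAlgebra.ofCoeff (Finsupp.equivFunOnFinite.symm (fun _ : G ⧸ H => c)) ∈ InvP := by
  rw [Representation.mem_invariants]
  intro g
  ext y
  rw [Representation.coeff_ofMulAction, MonoidAlgebra.coeff_ofCoeff, finsupp_symm_apply,
    finsupp_symm_apply]

/-- The morphism `V* ⟶ P/k` associated to a cocycle vanishing on `H`. -/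
noncomputable def PsiHom : Rep.of V.ρ.dual ⟶ permQuot k G H := Rep.ofHom {
  toLinearMap := (Submodule.mkQ _).comp (PsiF H V f hf1 hf2)
  isIntertwining' := by
    intro g
    refine LinearMap.ext fun (ξ : Module.Dual k V) => ?_
    show Submodule.Quotient.mk (PsiF H V f hf1 hf2 (V.ρ.dual g ξ))
      = (permQuot k G H).ρ g (Submodule.Quotient.mk (PsiF H V f hf1 hf2 ξ))
    rw [permQuot_ρ_mk, Submodule.Quotient.eq]
    have hdiff : PsiF H V f hf1 hf2 (V.ρ.dual g ξ) - ρP g (PsiF H V f hf1 hf2 ξ)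
        = MonoidAlgebra.ofCoeff (Finsupp.equivFunOnFinite.symm (fun _ : G ⧸ H => -(ξ (f g⁻¹)))) := by
      ext x
      rw [MonoidAlgebra.coeff_sub, Finsupp.sub_apply, PsiF_apply, Representation.coeff_ofMulAction,
        PsiF_apply, MonoidAlgebra.coeff_ofCoeff, finsupp_symm_apply, fbarFun_smul]
      have : (V.ρ.dual g ξ) (fbarFun H V f hf1 hf2 x)
          = ξ (V.ρ g⁻¹ (fbarFun H V f hf1 hf2 x)) := by
        rw [Representation.dual_apply]
        simp [Module.Dual.transpose_apply]
      rw [this, map_add]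
      ring
    rw [hdiff]
    exact const_mem_invP H (-(ξ (f g⁻¹))) }

lemma Phi_PsiHom : PhiFun H V (PsiHom H V f hf1 hf2) = f := by
  funext g
  rw [← sub_eq_zero, ← Module.forall_dual_apply_eq_zero_iff k]
  intro ξ
  rw [map_sub, PhiFun_pair]
  have h1 : (PsiHom H V f hf1 hf2).hom ξ = Submodule.Quotient.mk (PsiF H V f hf1 hf2 ξ) := rfl
  rw [h1, ePbar_mk, PsiF_apply, PsiF_apply, fbarFun_mk, fbarFun_mk]
  have hone : f 1 = 0 :=
    groupCohomology.cocycles₁_map_one (⟨f, hf1⟩ : groupCohomology.cocycles₁ V)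
  rw [hone, map_zero, sub_zero, sub_self]

end Psi

section Assemble

variable (V : Rep k G) [FiniteDimensional k V]

/-- The functions vanishing on `H`. -/
noncomputable def vanishSub : Submodule k (G → V) where
  carrier := {f | ∀ h ∈ H, f h = 0}
  add_mem' := fun {f} {g} hf hg h hh => by
    show f h + g h = 0
    rw [hf h hh, hg h hh, add_zero]
  zero_mem' := fun h hh => rfl
  smul_mem' := fun c f hf h hh => by
    show c • f h = 0
    rw [hf h hh, smul_zero]

/-- Cocycles vanishing on `H`. -/
noncomputable def Zsub : Submodule k (G → V) := groupCohomology.cocycles₁ V ⊓ vanishSub H V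

noncomputable def PhiL : (Rep.of V.ρ.dual ⟶ permQuot k G H) →ₗ[k] (Zsub H V) where
  toFun φ := ⟨PhiFun H V φ, ⟨PhiFun_mem_oneCocycles H V φ, fun h hh => PhiFun_vanish H V φ hh⟩⟩
  map_add' φ ψ := by
    apply Subtype.ext
    funext g
    show (Module.evalEquiv k V).symm ((ePbar H g).comp (φ + ψ).hom.toLinearMap) = _
    rw [Rep.add_hom]
    show (Module.evalEquiv k V).symm ((ePbar H g).comp (φ.hom.toLinearMap + ψ.hom.toLinearMap)) = _
    rw [LinearMap.comp_add, map_add]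
    rfl
  map_smul' c φ := by
    apply Subtype.ext
    funext g
    show (Module.evalEquiv k V).symm ((ePbar H g).comp (c • φ).hom.toLinearMap) = _
    rw [Rep.smul_hom]
    show (Module.evalEquiv k V).symm ((ePbar H g).comp (c • φ.hom.toLinearMap)) = _
    rw [LinearMap.comp_smul, map_smul]
    rfl

lemma PhiL_injective : Function.Injective (PhiL H V) := by
  rw [injective_iff_map_eq_zero]
  intro φ hφ
  have hfun : PhiFun H V φ = 0 := congrArg Subtype.val hφ
  have hpair : ∀ (g : G) (ξ : Module.Dual k V), ePbar H g (φ.hom ξ) = 0 := by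
    intro g ξ
    rw [← PhiFun_pair, hfun]
    simp
  apply Rep.hom_ext
  refine Representation.IntertwiningMap.ext (LinearMap.ext fun (ξ : Module.Dual k V) => ?_)
  rw [Rep.zero_hom]
  show φ.hom ξ = 0
  obtain ⟨p, hp⟩ := Submodule.Quotient.mk_surjective _ (φ.hom ξ)
  have hco : ∀ g : G, p.coeff (QuotientGroup.mk g) = p.coeff (QuotientGroup.mk 1) := by
    intro g
    have := hpair g ξ
    rw [← hp, ePbar_mk] at this
    exact sub_eq_zero.mp this
  have hpmem : p ∈ InvP := by
    rw [Representation.mem_invariants]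
    intro g'
    ext y
    obtain ⟨a, rfl⟩ := QuotientGroup.mk_surjective y
    rw [Representation.coeff_ofMulAction]
    show p.coeff (g'⁻¹ • (QuotientGroup.mk a : G ⧸ H)) = _
    rw [MulAction.Quotient.smul_mk, smul_eq_mul, hco (g'⁻¹ * a), hco a]
  rw [← hp]
  exact (Submodule.Quotient.mk_eq_zero _).2 hpmem

lemma PhiL_surjective : Function.Surjective (PhiL H V) := by
  rintro ⟨f, hf⟩
  rw [Zsub, Submodule.mem_inf] at hf
  refine ⟨PsiHom H V f hf.1 hf.2, ?_⟩
  exact Subtype.ext (Phi_PsiHom H V f hf.1 hf.2)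

/-- The key linear equivalence `Hom_G(V*, P/k) ≃ Z`. -/
noncomputable def homEquivZ : (Rep.of V.ρ.dual ⟶ permQuot k G H) ≃ₗ[k] (Zsub H V) :=
  LinearEquiv.ofBijective (PhiL H V) ⟨PhiL_injective H V, PhiL_surjective H V⟩

end Assemble

section H1side

variable (V : Rep k G) [FiniteDimensional k V]

noncomputable def psi1 : (Zsub H V) →ₗ[k] groupCohomology.H1 V :=
  (groupCohomology.H1π V).hom.comp (Submodule.inclusion inf_le_left)

lemma psi1_injective (hV : Representation.invariants (V.ρ.comp H.subtype) = ⊥) :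
    Function.Injective (psi1 H V) := by
  rw [injective_iff_map_eq_zero]
  rintro ⟨f, hf⟩ hz
  have hmem : ⇑(Submodule.inclusion (inf_le_left :
      Zsub H V ≤ groupCohomology.cocycles₁ V) ⟨f, hf⟩) ∈ groupCohomology.coboundaries₁ V :=
    (groupCohomology.H1π_eq_zero_iff _).1 hz
  obtain ⟨v, hv⟩ := hmem
  rw [Zsub, Submodule.mem_inf] at hf
  have hv' : ∀ g : G, V.ρ g v - v = f g := fun g => congrFun hv g
  have hvinv : v ∈ Representation.invariants (V.ρ.comp H.subtype) := by
    rw [Representation.mem_invariants]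
    intro h
    have := hv' (h : G)
    rw [hf.2 (h : G) h.2] at this
    show V.ρ (h : G) v = v
    rw [← sub_eq_zero]
    exact this
  rw [hV, Submodule.mem_bot] at hvinv
  subst hvinv
  apply Subtype.ext
  funext g
  show f g = 0
  rw [← hv' g, map_zero, sub_zero]

lemma psi1_surjective {r : ℕ} [hr : Fact r.Prime] [CharP k r] [Finite G]
    (hH : OrEqOr r H) (hV : Representation.invariants (V.ρ.comp H.subtype) = ⊥) :
    Function.Surjective (psi1 H V) := by
  intro c
  obtain ⟨f, rfl⟩ := (ModuleCat.epi_iff_surjective (groupCohomology.H1π V)).1 inferInstance c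
  obtain ⟨v, hv⟩ := aux_cobound (r := r) H hH V hV f.1 f.2
  have hb : (groupCohomology.d₀₁ V).hom v ∈ groupCohomology.cocycles₁ V :=
    groupCohomology.d₀₁_apply_mem_cocycles₁ (A := V) v
  set b : groupCohomology.cocycles₁ V := ⟨(groupCohomology.d₀₁ V).hom v, hb⟩ with hbdef
  have hzmem : (f.1 - (groupCohomology.d₀₁ V).hom v) ∈ Zsub H V := by
    rw [Zsub, Submodule.mem_inf]
    constructor
    · exact sub_mem f.2 hb
    · intro h hh
      show f.1 h - ((groupCohomology.d₀₁ V).hom v) h = 0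
      rw [groupCohomology.d₀₁_hom_apply, hv h hh, sub_self]
  refine ⟨⟨_, hzmem⟩, ?_⟩
  have hinc : (Submodule.inclusion (inf_le_left : Zsub H V ≤ groupCohomology.cocycles₁ V))
      ⟨_, hzmem⟩ = f - b := by
    apply Subtype.ext
    rfl
  show (groupCohomology.H1π V).hom ((Submodule.inclusion inf_le_left) ⟨_, hzmem⟩)
    = (groupCohomology.H1π V).hom f
  rw [hinc, map_sub]
  have hbz : (groupCohomology.H1π V).hom b = 0 :=
    (groupCohomology.H1π_eq_zero_iff b).2 ⟨v, rfl⟩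
  rw [hbz, sub_zero]

end H1side

end Main

/-- With `G` finite, `k = k̄` of characteristic `r`, `H ≤ G` with
`O_{r'}(H) = O^r(H)`, `P = Ind_H^G k`, and `V` a `kG`-module with `V^H = 0`, we have
`dim H^1(G, V) = dim Hom_G(V*, P/k)`, where `k` embeds in `P` as the `G`-fixed
submodule. -/
theorem stmt3 {r : ℕ} [Fact r.Prime] {k G : Type} [Field k] [IsAlgClosed k] [CharP k r]
    [Group G] [Finite G] (H : Subgroup G) (hH : OrEqOr r H)
    (V : Rep k G) [FiniteDimensional k V]
    (hV : Representation.invariants (V.ρ.comp H.subtype) = ⊥) :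
    Module.finrank k (groupCohomology V 1) =
      Module.finrank k (Rep.of V.ρ.dual ⟶ permQuot k G H) := by
  have e1 : Module.finrank k (groupCohomology V 1) = Module.finrank k (groupCohomology.H1 V) :=
    rfl
  have hbij : Function.Bijective (psi1 H V) :=
    ⟨psi1_injective H V hV, psi1_surjective H V (r := r) hH hV⟩
  have e2 : Module.finrank k (Zsub H V) = Module.finrank k (groupCohomology.H1 V) :=
    LinearEquiv.finrank_eq (LinearEquiv.ofBijective (psi1 H V) hbij)
  have e3 : Module.finrank k (Rep.of V.ρ.dual ⟶ permQuot k G H)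
      = Module.finrank k (Zsub H V) :=
    LinearEquiv.finrank_eq (homEquivZ H V)
  rw [e1, ← e2, ← e3]
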